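/- Let B be an invertible symmetric real d×d matrix and let w ∈ ℝ^d satisfy (w,w) = wᵀBw > 0. Define Φ : ℝ^d → ℝ by Φ(x) = 2∫_0^{(w,x)/√(w,w)} e^{−πs²} ds (i.e. Φ(x) = Erf(√π·(w,x)/√(w,w))). Then Φ is smooth and satisfies Vignéras' equation with λ = 0: V_0 Φ = 0 on all of ℝ^d. -/

import Mathlib

/-- Partial derivative in direction `i` of a function on `ℝ^d`. -/
noncomputable def pd {d : ℕ} (i : Fin d) (f : (Fin d → ℝ) → ℂ) : (Fin d → ℝ) → ℂ :=
  fun x => fderiv ℝ f x (Pi.single i 1)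

/-- Vignéras operator `V_λ f = ∑ (B⁻¹)_{ij} ∂_i∂_j f + 2π(∑ x_i ∂_i f − λ f)`. -/
noncomputable def Vop {d : ℕ} (B : Matrix (Fin d) (Fin d) ℝ) (lam : ℝ)
    (f : (Fin d → ℝ) → ℂ) : (Fin d → ℝ) → ℂ :=
  fun x =>
    (∑ i, ∑ j, ((B⁻¹ i j : ℝ) : ℂ) * pd i (pd j f) x)
      + 2 * (Real.pi : ℂ) * ((∑ i, (x i : ℂ) * pd i f x) - (lam : ℂ) * f x)

open Real Finset

/-- The (unnormalized) error function `t ↦ 2∫₀ᵗ e^{-πs²} ds`. -/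
noncomputable def erfR : ℝ → ℝ := fun t => 2 * ∫ s in (0:ℝ)..t, Real.exp (-(Real.pi * s^2))

lemma erfR_hasDerivAt (t : ℝ) : HasDerivAt erfR (2 * Real.exp (-(Real.pi * t^2))) t := by
  have hc : Continuous fun s : ℝ => Real.exp (-(Real.pi * s^2)) := by continuity
  have h := intervalIntegral.integral_hasDerivAt_right
    (hc.intervalIntegrable 0 t) (hc.stronglyMeasurableAtFilter _ _) hc.continuousAt
  exact h.const_mul 2

lemma erfR_contDiff : ContDiff ℝ (⊤:ℕ∞) erfR := by
  rw [contDiff_infty_iff_deriv]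
  refine ⟨fun t => (erfR_hasDerivAt t).differentiableAt, ?_⟩
  have : deriv erfR = fun t => 2 * Real.exp (-(Real.pi * t^2)) :=
    funext fun t => (erfR_hasDerivAt t).deriv
  rw [this]
  fun_prop

/-- The linear functional `x ↦ ∑ j a j * x j` as a continuous linear map. -/
noncomputable def lmap {d : ℕ} (a : Fin d → ℝ) : (Fin d → ℝ) →L[ℝ] ℝ :=
  ∑ j, a j • ContinuousLinearMap.proj (R := ℝ) (φ := fun _ : Fin d => ℝ) j

lemma lmap_apply {d : ℕ} (a x : Fin d → ℝ) : lmap a x = ∑ j, a j * x j := by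
  simp [lmap]

lemma lmap_single {d : ℕ} (a : Fin d → ℝ) (i : Fin d) : lmap a (Pi.single i 1) = a i := by
  rw [lmap_apply]
  simp [Pi.single_apply]

noncomputable def g1 (t : ℝ) : ℂ := ((2 * Real.exp (-(Real.pi * t^2)) : ℝ) : ℂ)
noncomputable def g2 (t : ℝ) : ℂ := (((-4) * Real.pi * t * Real.exp (-(Real.pi * t^2)) : ℝ) : ℂ)

lemma g1_hasDerivAt (t : ℝ) : HasDerivAt g1 (g2 t) t := by
  have h1 : HasDerivAt (fun t : ℝ => -(Real.pi * t^2)) (-(Real.pi * (2*t))) t := by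
    exact (((hasDerivAt_pow 2 t).const_mul Real.pi).neg).congr_deriv (by norm_num)
  have h2 := (h1.exp.const_mul 2).ofReal_comp
  refine h2.congr_deriv ?_
  simp [g2]; ring

lemma f_hasFDerivAt {d : ℕ} (a : Fin d → ℝ) (x : Fin d → ℝ) :
    HasFDerivAt (fun y => ((erfR (lmap a y) : ℝ) : ℂ))
      (((1 : ℝ →L[ℝ] ℝ).smulRight (g1 (lmap a x))).comp (lmap a)) x := by
  have hF : HasDerivAt (fun t => ((erfR t : ℝ) : ℂ)) (g1 (lmap a x)) (lmap a x) := by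
    simpa [g1] using (erfR_hasDerivAt (lmap a x)).ofReal_comp
  exact hF.hasFDerivAt.comp x (lmap a).hasFDerivAt

lemma g_hasFDerivAt {d : ℕ} (a : Fin d → ℝ) (x : Fin d → ℝ) :
    HasFDerivAt (fun y => g1 (lmap a y))
      (((1 : ℝ →L[ℝ] ℝ).smulRight (g2 (lmap a x))).comp (lmap a)) x :=
  (g1_hasDerivAt (lmap a x)).hasFDerivAt.comp x (lmap a).hasFDerivAt

lemma inv_quad_sum {d : ℕ} (B : Matrix (Fin d) (Fin d) ℝ)
    (hsymm : B.IsSymm) (hinv : IsUnit B.det) (w : Fin d → ℝ) :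
    ∑ i, ∑ j, B⁻¹ i j * ((∑ k, w k * B k i) * (∑ k, w k * B k j)) =
      ∑ i, ∑ j, w i * B i j * w j := by
  set u : Fin d → ℝ := fun j => ∑ k, w k * B k j with hu
  have hBw : u = B.mulVec w := by
    funext j
    simp only [hu, Matrix.mulVec, dotProduct]
    exact Finset.sum_congr rfl fun k _ => by rw [hsymm.apply, mul_comm]
  have h1 : B⁻¹.mulVec u = w := by
    rw [hBw, Matrix.mulVec_mulVec, Matrix.nonsing_inv_mul B hinv, Matrix.one_mulVec]
  have h2 : ∀ i, ∑ j, B⁻¹ i j * u j = w i := fun i => by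
    have := congrFun h1 i
    simpa [Matrix.mulVec, dotProduct] using this
  calc ∑ i, ∑ j, B⁻¹ i j * (u i * u j)
      = ∑ i, u i * ∑ j, B⁻¹ i j * u j := by
        refine Finset.sum_congr rfl fun i _ => ?_
        rw [Finset.mul_sum]; exact Finset.sum_congr rfl fun j _ => by ring
    _ = ∑ i, (∑ k, w k * B k i) * w i := by
        refine Finset.sum_congr rfl fun i _ => by rw [h2]
    _ = ∑ i, ∑ j, w i * B i j * w j := by
        simp only [Finset.sum_mul]
        rw [Finset.sum_comm]

/-- for an invertible symmetric `B` and `w` with `wᵀBw > 0`, the function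
`Φ(x) = 2∫_0^{(w,x)/√(w,w)} e^{−πs²} ds = Erf(√π (w,x)/√(w,w))` is smooth and satisfies
Vignéras' equation with `λ = 0` on all of `ℝ^d`. -/
theorem erf_solves_vigneras {d : ℕ} (hd : 1 ≤ d) (B : Matrix (Fin d) (Fin d) ℝ)
    (hsymm : B.IsSymm) (hinv : IsUnit B.det) (w : Fin d → ℝ)
    (hw : 0 < ∑ i, ∑ j, w i * B i j * w j) :
    ContDiff ℝ (⊤ : ℕ∞) (fun x : Fin d → ℝ =>
      2 * ∫ s in (0:ℝ)..((∑ i, ∑ j, w i * B i j * x j) /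
          Real.sqrt (∑ i, ∑ j, w i * B i j * w j)),
        Real.exp (-(Real.pi * s ^ 2))) ∧
    ∀ x : Fin d → ℝ,
      Vop B 0 (fun y => (Complex.ofReal
        (2 * ∫ s in (0:ℝ)..((∑ i, ∑ j, w i * B i j * y j) /
            Real.sqrt (∑ i, ∑ j, w i * B i j * w j)),
          Real.exp (-(Real.pi * s ^ 2))))) x = 0 := by
  set Q : ℝ := ∑ i, ∑ j, w i * B i j * w j with hQdef
  have hQ : 0 < Q := hw
  set c : ℝ := Real.sqrt Q with hcdef
  have hc0 : c ≠ 0 := by positivity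
  have hcc : c * c = Q := Real.mul_self_sqrt hQ.le
  set u : Fin d → ℝ := fun j => ∑ k, w k * B k j with hu
  set a : Fin d → ℝ := fun j => u j / c with ha
  -- the linear form in the statement equals `lmap a`
  have harr : ∀ x : Fin d → ℝ,
      (∑ i, ∑ j, w i * B i j * x j) / c = lmap a x := by
    intro x
    rw [lmap_apply]
    have : ∀ j, a j * x j = u j * x j / c := fun j => by
      simp only [ha]; ring
    simp only [this, ← Finset.sum_div]
    congr 1
    rw [Finset.sum_comm]
    exact Finset.sum_congr rfl fun j _ => by
      simp only [hu, Finset.sum_mul]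
  -- smoothness
  have hsmooth : ContDiff ℝ (⊤ : ℕ∞) (fun x : Fin d → ℝ =>
      2 * ∫ s in (0:ℝ)..((∑ i, ∑ j, w i * B i j * x j) / c),
        Real.exp (-(Real.pi * s ^ 2))) := by
    have : (fun x : Fin d → ℝ =>
        2 * ∫ s in (0:ℝ)..((∑ i, ∑ j, w i * B i j * x j) / c),
          Real.exp (-(Real.pi * s ^ 2))) = fun x => erfR (lmap a x) := by
      funext x; rw [← harr x]; rfl
    rw [this]
    exact erfR_contDiff.comp (lmap a).contDiff
  refine ⟨hsmooth, ?_⟩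
  intro x
  set f : (Fin d → ℝ) → ℂ := (fun y => (Complex.ofReal
        (2 * ∫ s in (0:ℝ)..((∑ i, ∑ j, w i * B i j * y j) /
            Real.sqrt (∑ i, ∑ j, w i * B i j * w j)),
          Real.exp (-(Real.pi * s ^ 2))))) with hf
  have hfe : f = fun y => ((erfR (lmap a y) : ℝ) : ℂ) := by
    funext y
    rw [hf]
    simp only [← hQdef, ← hcdef, harr y]
    rfl
  -- first partial derivatives
  have hpdf : ∀ j, pd j f = fun y => ((a j : ℝ) : ℂ) * g1 (lmap a y) := by
    intro j
    funext y
    rw [hfe]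
    unfold pd
    rw [(f_hasFDerivAt a y).fderiv]
    simp [lmap_single, Complex.real_smul]
  -- second partial derivatives
  have hpdpdf : ∀ i j, pd i (pd j f) x
      = ((a j : ℝ) : ℂ) * (((a i : ℝ) : ℂ) * g2 (lmap a x)) := by
    intro i j
    rw [hpdf j]
    unfold pd
    have h := (g_hasFDerivAt a x).const_mul (((a j : ℝ) : ℂ))
    rw [h.fderiv]
    simp [lmap_single, Complex.real_smul]
  set t : ℝ := lmap a x with ht
  -- key quadratic identity
  have hkey : ∑ i, ∑ j, B⁻¹ i j * (a j * a i) = 1 := by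
    have step : ∀ i j, B⁻¹ i j * (a j * a i) = B⁻¹ i j * (u i * u j) / Q := by
      intro i j
      simp only [ha]
      rw [div_mul_div_comm, hcc]
      ring
    simp only [step, ← Finset.sum_div]
    rw [inv_quad_sum B hsymm hinv w, ← hQdef, div_self hQ.ne']
  -- the x-gradient term
  have hsx : ∑ i, x i * a i = t := by
    rw [ht, lmap_apply]
    exact Finset.sum_congr rfl fun i _ => by ring
  -- assemble
  have e1 : ∑ i, ∑ j, ((B⁻¹ i j : ℝ) : ℂ) * pd i (pd j f) x
      = ∑ i, ∑ j, ((B⁻¹ i j : ℝ) : ℂ) * (((a j : ℝ) : ℂ) * (((a i : ℝ) : ℂ) * g2 t)) :=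
    Finset.sum_congr rfl fun i _ => Finset.sum_congr rfl fun j _ => by rw [hpdpdf]
  have e2 : ∑ i, ((x i : ℝ) : ℂ) * pd i f x
      = ∑ i, ((x i : ℝ) : ℂ) * (((a i : ℝ) : ℂ) * g1 t) :=
    Finset.sum_congr rfl fun i _ => by simp only [hpdf, ← ht]
  rw [Vop]
  rw [e1, e2]
  have hS1 : ∑ i, ∑ j, ((B⁻¹ i j : ℝ) : ℂ) * (((a j : ℝ) : ℂ) * (((a i : ℝ) : ℂ) * g2 t))
      = g2 t := by
    have : ∀ i j, ((B⁻¹ i j : ℝ) : ℂ) * (((a j : ℝ) : ℂ) * (((a i : ℝ) : ℂ) * g2 t))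
        = ((B⁻¹ i j * (a j * a i) : ℝ) : ℂ) * g2 t := by
      intro i j; push_cast; ring
    simp only [this, ← Finset.sum_mul, ← Complex.ofReal_sum]
    rw [show (∑ i, ∑ j, B⁻¹ i j * (a j * a i)) = (1:ℝ) from hkey]
    simp
  have hS2 : ∑ i, ((x i : ℝ) : ℂ) * (((a i : ℝ) : ℂ) * g1 t)
      = ((t : ℝ) : ℂ) * g1 t := by
    have : ∀ i, ((x i : ℝ) : ℂ) * (((a i : ℝ) : ℂ) * g1 t)
        = ((x i * a i : ℝ) : ℂ) * g1 t := by
      intro i; push_cast; ring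
    simp only [this, ← Finset.sum_mul, ← Complex.ofReal_sum, hsx]
  rw [hS1, hS2]
  simp only [Complex.ofReal_zero, zero_mul, sub_zero, g1, g2]
  push_cast
  ring
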